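/- Let C be a cyclic code of length n over R = F_p[u,v]/⟨u^k, v², uv−vu⟩, viewed as an ideal of R[x]/⟨xⁿ−1⟩, with associated torsion codes C₁,…,C_{2k} over F_p, where C_i = ⟨g_i(x)⟩ ⊆ F_p[x]/⟨xⁿ−1⟩. Then g_{2k}(x) | g_{2k−1}(x) | ⋯ | g_{k+1}(x) and g_k(x) | g_{k−1}(x) | ⋯ | g₁(x) | (xⁿ−1) in F_p[x], and moreover g_{k+i}(x) | g_i(x) for all 1 ≤ i ≤ k. -/

import Mathlib

set_option synthInstance.maxHeartbeats 1000000
set_option maxHeartbeats 1000000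


open Polynomial

/-- The ring `F_p[u,v]/⟨u^k, v²⟩` (the variables commute, so `uv - vu = 0` is automatic). -/
abbrev Rbase (p k : ℕ) : Type :=
  MvPolynomial (Fin 2) (ZMod p) ⧸
    Ideal.span {(MvPolynomial.X 0 : MvPolynomial (Fin 2) (ZMod p)) ^ k, MvPolynomial.X 1 ^ 2}

noncomputable instance (p k : ℕ) : CommRing (Rbase p k) := Ideal.Quotient.commRing _

/-- The image of `u`. -/
noncomputable def uu (p k : ℕ) : Rbase p k := Ideal.Quotient.mk _ (MvPolynomial.X 0)

/-- The image of `v`. -/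
noncomputable def vv (p k : ℕ) : Rbase p k := Ideal.Quotient.mk _ (MvPolynomial.X 1)

/-- `R_n = (F_p[u,v]/⟨u^k,v²⟩)[x]/⟨xⁿ−1⟩`, the ambient ring of cyclic codes of length `n`. -/
abbrev Rn (p k n : ℕ) : Type :=
  Polynomial (Rbase p k) ⧸
    Ideal.span {(Polynomial.X : Polynomial (Rbase p k)) ^ n - 1}

noncomputable def uR (p k n : ℕ) : Rn p k n := Ideal.Quotient.mk _ (Polynomial.C (uu p k))
noncomputable def vR (p k n : ℕ) : Rn p k n := Ideal.Quotient.mk _ (Polynomial.C (vv p k))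
noncomputable def xR (p k n : ℕ) : Rn p k n := Ideal.Quotient.mk _ Polynomial.X

/-- The canonical map `F_p[x] → R_n` (coefficientwise inclusion followed by the quotient map). -/
noncomputable def theta (p k n : ℕ) : Polynomial (ZMod p) →+* Rn p k n :=
  (Ideal.Quotient.mk _).comp (Polynomial.mapRingHom (algebraMap (ZMod p) (Rbase p k)))

/-- The set of `f ∈ F_p[x]` representing elements of
`C_i = Tor Res … Res (C) = {f : u^{i-1}·f ∈ C mod ⟨u^i, v⟩}`. -/
def resTorSet (p k n : ℕ) (C : Ideal (Rn p k n)) (i : ℕ) : Set (Polynomial (ZMod p)) :=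
  {f | uR p k n ^ (i - 1) * theta p k n f ∈
        C ⊔ Ideal.span {uR p k n ^ i, vR p k n}}

/-- The set of `f ∈ F_p[x]` representing elements of
`C_{k+i} = Tor Res … Res Tor (C) = {f : u^{i-1}·v·f ∈ C mod ⟨u^i v⟩}`. -/
def torTorSet (p k n : ℕ) (C : Ideal (Rn p k n)) (i : ℕ) : Set (Polynomial (ZMod p)) :=
  {f | uR p k n ^ (i - 1) * vR p k n * theta p k n f ∈
        C ⊔ Ideal.span {uR p k n ^ i * vR p k n}}

/-- `g` is the (monic, minimal-degree) generator of the ideal of `F_p[x]/⟨xⁿ−1⟩` whose set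
of polynomial representatives is `S`. -/
def IsMinGen (p n : ℕ) (S : Set (Polynomial (ZMod p))) (g : Polynomial (ZMod p)) : Prop :=
  g.Monic ∧
  S = {f | ∃ a b : Polynomial (ZMod p), f = g * a + (Polynomial.X ^ n - 1) * b} ∧
  ∀ f ∈ S, f ≠ 0 → g.degree ≤ f.degree

/-- The canonical generator
`A_i = u^{i-1}g_i + u^i g_{ii} + ⋯ + u^{k-1}g_{i(k-1)} + v(g_{ik} + ⋯ + u^{k-1}g_{i(2k-1)})`
as a polynomial over `F_p[u,v]/⟨u^k,v²⟩`, for `1 ≤ i ≤ k`. -/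
noncomputable def Apoly (p k : ℕ) (g : ℕ → Polynomial (ZMod p))
    (gg : ℕ → ℕ → Polynomial (ZMod p)) (i : ℕ) : Polynomial (Rbase p k) :=
  Polynomial.C (uu p k ^ (i - 1)) * (g i).map (algebraMap (ZMod p) (Rbase p k))
    + ∑ j ∈ Finset.Icc i (k - 1),
        Polynomial.C (uu p k ^ j) * (gg i j).map (algebraMap (ZMod p) (Rbase p k))
    + Polynomial.C (vv p k) *
        ∑ j ∈ Finset.Icc k (2 * k - 1),
          Polynomial.C (uu p k ^ (j - k)) * (gg i j).map (algebraMap (ZMod p) (Rbase p k))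

/-- The canonical generator
`A_{k+i} = v(u^{i-1}g_{k+i} + u^i g_{(k+i)(k+i)} + ⋯ + u^{k-1}g_{(k+i)(2k-1)})`
as a polynomial over `F_p[u,v]/⟨u^k,v²⟩`, for `1 ≤ i ≤ k`. -/
noncomputable def AVpoly (p k : ℕ) (g : ℕ → Polynomial (ZMod p))
    (gg : ℕ → ℕ → Polynomial (ZMod p)) (i : ℕ) : Polynomial (Rbase p k) :=
  Polynomial.C (vv p k) *
    (Polynomial.C (uu p k ^ (i - 1)) * (g (k + i)).map (algebraMap (ZMod p) (Rbase p k))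
      + ∑ j ∈ Finset.Icc (k + i) (2 * k - 1),
          Polynomial.C (uu p k ^ (j - k)) * (gg (k + i) j).map (algebraMap (ZMod p) (Rbase p k)))

/-- `A_i` as an element of `R_n`. -/
noncomputable def Aelt (p k n : ℕ) (g : ℕ → Polynomial (ZMod p))
    (gg : ℕ → ℕ → Polynomial (ZMod p)) (i : ℕ) : Rn p k n :=
  Ideal.Quotient.mk _ (Apoly p k g gg i)

/-- `A_{k+i}` as an element of `R_n`. -/
noncomputable def AVelt (p k n : ℕ) (g : ℕ → Polynomial (ZMod p))
    (gg : ℕ → ℕ → Polynomial (ZMod p)) (i : ℕ) : Rn p k n :=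
  Ideal.Quotient.mk _ (AVpoly p k g gg i)

/-- The minimum Hamming weight of a nonzero codeword of `C ⊆ R_n` (weights are computed
on the unique representative of degree `< n`). -/
noncomputable def dHam (p k n : ℕ) (C : Ideal (Rn p k n)) : ℕ :=
  sInf {m | ∃ f : Polynomial (Rbase p k), f ≠ 0 ∧ f.degree < (n : ℕ) ∧
    Ideal.Quotient.mk (Ideal.span {(Polynomial.X : Polynomial (Rbase p k)) ^ n - 1}) f ∈ C ∧
    m = f.support.card}

/-- The minimum Hamming weight of a nonzero codeword of a cyclic code over `F_p` given by a
set `S` of polynomial representatives (closed under adding multiples of `xⁿ−1`). -/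
noncomputable def dHamF (p n : ℕ) (S : Set (Polynomial (ZMod p))) : ℕ :=
  sInf {m | ∃ f : Polynomial (ZMod p), f ≠ 0 ∧ f.degree < (n : ℕ) ∧ f ∈ S ∧
    m = f.support.card}

lemma isMinGen_dvd_X_pow_sub_one {p n : ℕ} [Fact p.Prime] {S : Set (Polynomial (ZMod p))}
    {g : Polynomial (ZMod p)} (h : IsMinGen p n S g) :
    g ∣ (X ^ n - 1 : Polynomial (ZMod p)) := by
  obtain ⟨hm, hS, hmin⟩ := h
  have hmemr : (X ^ n - 1 : Polynomial (ZMod p)) %ₘ g ∈ S := by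
    rw [hS]
    exact ⟨-((X ^ n - 1) /ₘ g), 1, by
      have := modByMonic_add_div (X ^ n - 1 : Polynomial (ZMod p)) g
      linear_combination this⟩
  by_cases hr : (X ^ n - 1 : Polynomial (ZMod p)) %ₘ g = 0
  · exact (modByMonic_eq_zero_iff_dvd hm).1 hr
  · exact absurd (hmin _ hmemr hr)
      (not_le.2 (degree_modByMonic_lt _ hm))

lemma isMinGen_self_mem {p n : ℕ} {S : Set (Polynomial (ZMod p))}
    {g : Polynomial (ZMod p)} (h : IsMinGen p n S g) : g ∈ S := by
  rw [h.2.1]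
  exact ⟨1, 0, by ring⟩

lemma isMinGen_dvd {p n : ℕ} [Fact p.Prime] {S : Set (Polynomial (ZMod p))}
    {g f : Polynomial (ZMod p)} (h : IsMinGen p n S g) (hf : f ∈ S) : g ∣ f := by
  have hX := isMinGen_dvd_X_pow_sub_one h
  rw [h.2.1] at hf
  obtain ⟨a, b, rfl⟩ := hf
  exact dvd_add (dvd_mul_right _ _) (hX.mul_right b)

lemma vR_sq (p k n : ℕ) : vR p k n * vR p k n = 0 := by
  have h : vv p k * vv p k = 0 := by
    unfold vv
    rw [← map_mul, ← pow_two]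
    exact Ideal.Quotient.eq_zero_iff_mem.2 (Ideal.subset_span (by simp))
  unfold vR
  rw [← map_mul, ← Polynomial.C_mul, h, Polynomial.C_0, map_zero]

lemma stepRes {p k n j : ℕ} {C : Ideal (Rn p k n)} {t : Rn p k n}
    (h : uR p k n ^ j * t ∈ C ⊔ Ideal.span {uR p k n ^ (j + 1), vR p k n}) :
    uR p k n ^ (j + 1) * t ∈ C ⊔ Ideal.span {uR p k n ^ (j + 2), vR p k n} := by
  obtain ⟨c, hc, s, hs, hz⟩ := Submodule.mem_sup.1 h
  obtain ⟨a, b, hab⟩ := Ideal.mem_span_pair.1 hs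
  have e : uR p k n ^ (j + 1) * t = uR p k n * c + uR p k n * s := by
    linear_combination -(uR p k n) * hz
  rw [e]
  exact Ideal.add_mem _ (Ideal.mem_sup_left (Ideal.mul_mem_left _ _ hc))
    (Ideal.mem_sup_right (Ideal.mem_span_pair.2
      ⟨a, b * uR p k n, by linear_combination uR p k n * hab⟩))

lemma stepTor {p k n j : ℕ} {C : Ideal (Rn p k n)} {t : Rn p k n}
    (h : uR p k n ^ j * vR p k n * t ∈ C ⊔ Ideal.span {uR p k n ^ (j + 1) * vR p k n}) :
    uR p k n ^ (j + 1) * vR p k n * t ∈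
      C ⊔ Ideal.span {uR p k n ^ (j + 2) * vR p k n} := by
  obtain ⟨c, hc, s, hs, hz⟩ := Submodule.mem_sup.1 h
  obtain ⟨a, ha⟩ := Ideal.mem_span_singleton'.1 hs
  have e : uR p k n ^ (j + 1) * vR p k n * t = uR p k n * c + uR p k n * s := by
    linear_combination -(uR p k n) * hz
  rw [e]
  exact Ideal.add_mem _ (Ideal.mem_sup_left (Ideal.mul_mem_left _ _ hc))
    (Ideal.mem_sup_right (Ideal.mem_span_singleton.2 ⟨a, by rw [← ha]; ring⟩))

lemma crossStep {p k n j : ℕ} {C : Ideal (Rn p k n)} {t : Rn p k n}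
    (h : uR p k n ^ j * t ∈ C ⊔ Ideal.span {uR p k n ^ (j + 1), vR p k n}) :
    uR p k n ^ j * vR p k n * t ∈
      C ⊔ Ideal.span {uR p k n ^ (j + 1) * vR p k n} := by
  obtain ⟨c, hc, s, hs, hz⟩ := Submodule.mem_sup.1 h
  obtain ⟨a, b, hab⟩ := Ideal.mem_span_pair.1 hs
  have e : uR p k n ^ j * vR p k n * t = vR p k n * c + vR p k n * s := by
    linear_combination -(vR p k n) * hz
  rw [e]
  exact Ideal.add_mem _ (Ideal.mem_sup_left (Ideal.mul_mem_left _ _ hc))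
    (Ideal.mem_sup_right (Ideal.mem_span_singleton.2
      ⟨a, by linear_combination -(vR p k n) * hab + b * vR_sq p k n⟩))

/-- divisibility chains among the torsion polynomials `g₁, …, g_{2k}` of a
cyclic code `C` of length `n` over `F_p[u,v]/⟨u^k,v²,uv−vu⟩`:
`g_{2k} | g_{2k−1} | ⋯ | g_{k+1}`, `g_k | ⋯ | g₁ | (xⁿ−1)`, and `g_{k+i} | g_i`. -/
theorem stmt6 (p k n : ℕ) [Fact p.Prime] (hk : 0 < k) (hn : 0 < n)
    (C : Ideal (Rn p k n)) (g : ℕ → Polynomial (ZMod p))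
    (hres : ∀ i ∈ Finset.Icc 1 k, IsMinGen p n (resTorSet p k n C i) (g i))
    (htor : ∀ i ∈ Finset.Icc 1 k, IsMinGen p n (torTorSet p k n C i) (g (k + i))) :
    (∀ i ∈ Finset.Icc 1 (k - 1), g (i + 1) ∣ g i) ∧
    (∀ i ∈ Finset.Icc (k + 1) (2 * k - 1), g (i + 1) ∣ g i) ∧
    g 1 ∣ (Polynomial.X ^ n - 1 : Polynomial (ZMod p)) ∧
    (∀ i ∈ Finset.Icc 1 k, g (k + i) ∣ g i) := by
  refine ⟨?_, ?_, ?_, ?_⟩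
  · intro i hi
    rw [Finset.mem_Icc] at hi
    obtain ⟨j, rfl⟩ : ∃ j, i = j + 1 := ⟨i - 1, by omega⟩
    have h1 := hres (j + 1) (Finset.mem_Icc.2 ⟨by omega, by omega⟩)
    have h2 := hres (j + 2) (Finset.mem_Icc.2 ⟨by omega, by omega⟩)
    refine isMinGen_dvd h2 ?_
    have hmem := isMinGen_self_mem h1
    simp only [resTorSet, Set.mem_setOf_eq, Nat.add_sub_cancel] at hmem ⊢
    exact stepRes hmem
  · intro i hi
    rw [Finset.mem_Icc] at hi
    obtain ⟨j, rfl⟩ : ∃ j, i = k + j + 1 := ⟨i - k - 1, by omega⟩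
    have h1 := htor (j + 1) (Finset.mem_Icc.2 ⟨by omega, by omega⟩)
    have h2 := htor (j + 2) (Finset.mem_Icc.2 ⟨by omega, by omega⟩)
    have e1 : k + (j + 1) = k + j + 1 := by ring
    have e2 : k + (j + 2) = k + j + 1 + 1 := by ring
    rw [e1] at h1
    rw [e2] at h2
    refine isMinGen_dvd h2 ?_
    have hmem := isMinGen_self_mem h1
    simp only [torTorSet, Set.mem_setOf_eq, Nat.add_sub_cancel] at hmem ⊢
    exact stepTor hmem
  · exact isMinGen_dvd_X_pow_sub_one (hres 1 (Finset.mem_Icc.2 ⟨le_refl 1, hk⟩))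
  · intro i hi
    rw [Finset.mem_Icc] at hi
    obtain ⟨j, rfl⟩ : ∃ j, i = j + 1 := ⟨i - 1, by omega⟩
    have h1 := hres (j + 1) (Finset.mem_Icc.2 ⟨by omega, by omega⟩)
    have h2 := htor (j + 1) (Finset.mem_Icc.2 ⟨by omega, by omega⟩)
    refine isMinGen_dvd h2 ?_
    have hmem := isMinGen_self_mem h1
    simp only [resTorSet, torTorSet, Set.mem_setOf_eq, Nat.add_sub_cancel] at hmem ⊢
    exact crossStep hmem
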